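/- First-order approximation of the regularization operator (pointwise form of Lemma 'Approx B'): let v : ℝ × ℝ → ℝ be Y-periodic in its second variable and twice continuously differentiable in its first variable, with |∂ₓv(x, y)| and |∂ₓₓv(x, y)| ≤ M for all x, y. Then for every ε > 0 and every x ∈ ℝ, |(B_ε v)(x) − (T_ε*(v + ε·P v))(x)| ≤ M·ε², where (P v)(x, y) = y·∂ₓv(x, y); that is, B_ε v = T_ε*(v + ε y·∇ₓ v) + ε·O(ε). -/

import Mathlib

open MeasureTheory intervalIntegral Set

-- Lipschitz bound for the derivative
lemma lip_deriv {f : ℝ → ℝ} (hf : ContDiff ℝ 2 f) {M : ℝ}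
    (hM : ∀ t, |deriv (deriv f) t| ≤ M) (a b : ℝ) :
    |deriv f b - deriv f a| ≤ M * |b - a| := by
  have h2 : ContDiff ℝ 1 (deriv f) := by
    have := contDiff_succ_iff_deriv.mp (by exact_mod_cast hf : ContDiff ℝ ((1:ℕ) + 1) f)
    exact this.2.2
  have hdiff : Differentiable ℝ (deriv f) := h2.differentiable one_ne_zero
  have := Convex.norm_image_sub_le_of_norm_deriv_le (s := Set.univ) (f := deriv f) (C := M)
    (fun t _ => (hdiff t)) (fun t _ => hM t) convex_univ (Set.mem_univ a) (Set.mem_univ b)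
  simpa [Real.norm_eq_abs] using this

lemma taylor_bound {f : ℝ → ℝ} (hf : ContDiff ℝ 2 f) {M : ℝ}
    (hM : ∀ t, |deriv (deriv f) t| ≤ M) (a b : ℝ) :
    |f b - f a - deriv f a * (b - a)| ≤ M / 2 * (b - a) ^ 2 := by
  have h2 : ContDiff ℝ 1 (deriv f) := by
    have := contDiff_succ_iff_deriv.mp (by exact_mod_cast hf : ContDiff ℝ ((1:ℕ) + 1) f)
    exact this.2.2
  have hdiff : Differentiable ℝ f := hf.differentiable (by norm_num)
  have hcont : Continuous (deriv f) := h2.continuous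
  have hg : ∀ t ∈ Set.uIcc a b, HasDerivAt (fun t => f t - deriv f a * t)
      (deriv f t - deriv f a) t := fun t _ => by
    have h := ((hdiff t).hasDerivAt).sub ((hasDerivAt_id t).const_mul (deriv f a))
    simp only [mul_one] at h; exact h
  have hint : IntervalIntegrable (fun t => deriv f t - deriv f a) volume a b :=
    (hcont.sub continuous_const).intervalIntegrable a b
  have key : f b - f a - deriv f a * (b - a) =
      ∫ t in a..b, (deriv f t - deriv f a) := by
    rw [intervalIntegral.integral_eq_sub_of_hasDerivAt hg hint]
    ring
  rw [key, ← Real.norm_eq_abs]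
  have hlip : ∀ t, |deriv f t - deriv f a| ≤ M * |t - a| := fun t => lip_deriv hf hM a t
  rcases le_total a b with hab | hab
  · have h1 : ‖∫ t in a..b, (deriv f t - deriv f a)‖ ≤ ∫ t in a..b, M * (t - a) := by
      refine (intervalIntegral.norm_integral_le_integral_norm hab).trans ?_
      refine intervalIntegral.integral_mono_on hab
        ((hcont.sub continuous_const).norm.intervalIntegrable a b)
        ((continuous_const.mul (continuous_id.sub continuous_const)).intervalIntegrable a b)
        (fun t ht => ?_)
      have h := hlip t
      rw [Real.norm_eq_abs]
      rwa [abs_of_nonneg (by linarith [ht.1] : (0:ℝ) ≤ t - a)] at h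
    have h2 : (∫ t in a..b, M * (t - a)) = M / 2 * (b - a) ^ 2 := by
      rw [intervalIntegral.integral_const_mul, intervalIntegral.integral_sub
        intervalIntegrable_id (intervalIntegrable_const), integral_id,
        intervalIntegral.integral_const]
      simp only [smul_eq_mul]; ring
    rw [← h2]; exact h1
  · rw [intervalIntegral.integral_symm, norm_neg]
    have h1 : ‖∫ t in b..a, (deriv f t - deriv f a)‖ ≤ ∫ t in b..a, M * (a - t) := by
      refine (intervalIntegral.norm_integral_le_integral_norm hab).trans ?_
      refine intervalIntegral.integral_mono_on hab
        ((hcont.sub continuous_const).norm.intervalIntegrable b a)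
        ((continuous_const.mul (continuous_const.sub continuous_id)).intervalIntegrable b a)
        (fun t ht => ?_)
      have h := hlip t
      rw [Real.norm_eq_abs]
      rwa [abs_of_nonpos (by linarith [ht.2] : t - a ≤ 0), neg_sub] at h
    have h2 : (∫ t in b..a, M * (a - t)) = M / 2 * (b - a) ^ 2 := by
      rw [intervalIntegral.integral_const_mul, intervalIntegral.integral_sub
        intervalIntegrable_const intervalIntegrable_id, integral_id,
        intervalIntegral.integral_const]
      simp only [smul_eq_mul]; ring
    rw [← h2]; exact h1

/-- `kEps ε x = ⌊x/ε + 1/2⌋`. -/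
noncomputable def kEps (ε x : ℝ) : ℤ := ⌊x / ε + 1 / 2⌋

/-- `cEps ε x = ε · kEps ε x`. -/
noncomputable def cEps (ε x : ℝ) : ℝ := ε * (kEps ε x : ℝ)

/-- `yEps ε x = x/ε − kEps ε x`. -/
noncomputable def yEps (ε x : ℝ) : ℝ := x / ε - (kEps ε x : ℝ)

/-- The adjoint two-scale transform `(T_ε* w)(x) = ∫_{−1/2}^{1/2} w(c_ε(x) + ε·z, y_ε(x)) dz`. -/
noncomputable def twoScaleAdj (ε : ℝ) (w : ℝ → ℝ → ℝ) (x : ℝ) : ℝ :=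
  ∫ z in (-(1:ℝ)/2)..(1/2), w (cEps ε x + ε * z) (yEps ε x)

/-- The regularization operator `(B_ε w)(x) = w(x, x/ε)`. -/
noncomputable def regOp (ε : ℝ) (w : ℝ → ℝ → ℝ) (x : ℝ) : ℝ := w x (x / ε)

/-- Partial derivative with respect to the first variable. -/
noncomputable def pdx (v : ℝ → ℝ → ℝ) (x y : ℝ) : ℝ := deriv (fun t => v t y) x

set_option maxHeartbeats 1000000 in
/-- First-order approximation of the regularization operator
(pointwise form of Lemma "Approx B"):
`B_ε v = T_ε*(v + ε y·∇ₓ v) + ε·O(ε)`. -/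
theorem regOp_first_order_approx (v : ℝ → ℝ → ℝ)
    (hper : ∀ x y : ℝ, v x (y + 1) = v x y)
    (hsmooth : ∀ y : ℝ, ContDiff ℝ 2 (fun x => v x y))
    (M : ℝ)
    (hd1 : ∀ x y : ℝ, |pdx v x y| ≤ M)
    (hd2 : ∀ x y : ℝ, |pdx (pdx v) x y| ≤ M)
    (ε : ℝ) (hε : 0 < ε) (x : ℝ) :
    |regOp ε v x -
        twoScaleAdj ε (fun x y => v x y + ε * (y * pdx v x y)) x| ≤ M * ε ^ 2 := by
  have hεne : ε ≠ 0 := ne_of_gt hε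
  set k : ℤ := kEps ε x with hk
  set y : ℝ := yEps ε x with hy
  set c : ℝ := cEps ε x with hc
  set f : ℝ → ℝ := fun t => v t y with hfdef
  have hM0 : 0 ≤ M := (abs_nonneg _).trans (hd1 0 0)
  have hx : c + ε * y = x := by
    rw [hc, hy, cEps, yEps]; field_simp; ring
  have hylb : -(1/2) ≤ y := by
    have := Int.floor_le (x / ε + 1 / 2)
    rw [hy, yEps]; unfold kEps; linarith
  have hyub : y < 1/2 := by
    have := Int.lt_floor_add_one (x / ε + 1 / 2)
    rw [hy, yEps]; unfold kEps; push_cast at this ⊢; linarith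
  have hf : ContDiff ℝ 2 f := hsmooth y
  have hd1' : ∀ t, |deriv f t| ≤ M := fun t => hd1 t y
  have hd2' : ∀ t, |deriv (deriv f) t| ≤ M := fun t => hd2 t y
  have hcontf : Continuous f := hf.continuous
  have hcontf' : Continuous (deriv f) := by
    have := contDiff_succ_iff_deriv.mp (by exact_mod_cast hf : ContDiff ℝ ((1:ℕ) + 1) f)
    exact this.2.2.continuous
  -- regOp equals f x via periodicity
  have hreg : regOp ε v x = f x := by
    have hp : Function.Periodic (v x) 1 := fun t => hper x t
    have h := hp.sub_int_mul_eq (x := x / ε) k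
    rw [regOp, ← h]
    simp only [hfdef, hy, yEps, mul_one]
    rfl
  -- the transformed side
  set g : ℝ → ℝ := fun z => f (c + ε * z) + ε * (y * deriv f (c + ε * z)) with hgdef
  have hcontg : Continuous g := by
    have hc1 : Continuous (fun z : ℝ => c + ε * z) := by continuity
    exact (hcontf.comp hc1).add (continuous_const.mul
      (continuous_const.mul (hcontf'.comp hc1)))
  have hA : twoScaleAdj ε (fun x y => v x y + ε * (y * pdx v x y)) x
      = ∫ z in (-(1:ℝ)/2)..(1/2), g z := rfl
  have hsub : regOp ε v x - twoScaleAdj ε (fun x y => v x y + ε * (y * pdx v x y)) x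
      = ∫ z in (-(1:ℝ)/2)..(1/2), (f x - g z) := by
    rw [intervalIntegral.integral_sub intervalIntegrable_const
      (hcontg.intervalIntegrable _ _), intervalIntegral.integral_const, hreg, hA]
    norm_num
  set E : ℝ → ℝ := fun z =>
    -(f (c + ε * z) - f x - deriv f x * ((c + ε * z) - x))
      + ε * y * (deriv f x - deriv f (c + ε * z)) with hEdef
  have hc1 : Continuous (fun z : ℝ => c + ε * z) := by continuity
  have hE0 : Continuous (fun z : ℝ => f (c + ε * z)) := hcontf.comp hc1
  have hE0' : Continuous (fun z : ℝ => deriv f (c + ε * z)) := hcontf'.comp hc1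
  have hcontE : Continuous E :=
    (((hE0.sub continuous_const).sub
      (continuous_const.mul (hc1.sub continuous_const))).neg).add
      (continuous_const.mul (continuous_const.sub hE0'))
  have hdecomp : ∀ z : ℝ, f x - g z = E z + (-(ε * deriv f x)) * z := by
    intro z
    rw [hgdef, hEdef, ← hx]
    ring_nf
  have hzero : (∫ z in (-(1:ℝ)/2)..(1/2), (-(ε * deriv f x)) * z) = 0 := by
    rw [intervalIntegral.integral_const_mul, integral_id]
    norm_num
  have hsplit : (∫ z in (-(1:ℝ)/2)..(1/2), (f x - g z))
      = ∫ z in (-(1:ℝ)/2)..(1/2), E z := by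
    rw [intervalIntegral.integral_congr (g := fun z => E z + (-(ε * deriv f x)) * z)
      (fun z _ => hdecomp z)]
    rw [intervalIntegral.integral_add (hcontE.intervalIntegrable _ _)
      (Continuous.intervalIntegrable (by continuity) _ _), hzero, add_zero]
  rw [hsub, hsplit, ← Real.norm_eq_abs]
  have hbound : ∀ z ∈ Set.uIoc (-(1:ℝ)/2) (1/2), ‖E z‖ ≤ M * ε ^ 2 := by
    intro z hz
    rw [Set.uIoc_of_le (by norm_num)] at hz
    have hz1 := hz.1
    have hz2 := hz.2
    have hzy : |z - y| ≤ 1 := abs_le.2 ⟨by linarith, by linarith⟩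
    have hxx' : (c + ε * z) - x = ε * (z - y) := by rw [← hx]; ring
    have h1 : |f (c + ε * z) - f x - deriv f x * ((c + ε * z) - x)| ≤ M / 2 * ε ^ 2 := by
      refine (taylor_bound hf hd2' x (c + ε * z)).trans ?_
      rw [hxx', mul_pow]
      have h0 : (z - y) ^ 2 ≤ 1 := by
        nlinarith [abs_nonneg (z - y), sq_abs (z - y)]
      nlinarith [mul_nonneg (mul_nonneg (by linarith : (0:ℝ) ≤ M/2) (sq_nonneg ε))
        (by linarith : (0:ℝ) ≤ 1 - (z - y)^2)]
    have h2 : |ε * y * (deriv f x - deriv f (c + ε * z))| ≤ M / 2 * ε ^ 2 := by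
      rw [abs_mul]
      have hl : |deriv f x - deriv f (c + ε * z)| ≤ M * ε := by
        have hll := lip_deriv hf hd2' (c + ε * z) x
        refine hll.trans ?_
        rw [show x - (c + ε * z) = ε * (y - z) by rw [← hx]; ring, abs_mul,
          abs_of_pos hε]
        have hyz : |y - z| ≤ 1 := by rwa [abs_sub_comm] at hzy
        nlinarith [abs_nonneg (y - z), mul_nonneg hM0 hε.le]
      have hεy : |ε * y| ≤ ε / 2 := by
        rw [abs_mul, abs_of_pos hε]
        have : |y| ≤ 1/2 := abs_le.2 ⟨by linarith, by linarith⟩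
        nlinarith
      calc |ε * y| * |deriv f x - deriv f (c + ε * z)| ≤ (ε / 2) * (M * ε) := by
            apply mul_le_mul hεy hl (abs_nonneg _) (by positivity)
        _ = M / 2 * ε ^ 2 := by ring
    calc ‖E z‖ ≤ |(-(f (c + ε * z) - f x - deriv f x * ((c + ε * z) - x)))|
          + |ε * y * (deriv f x - deriv f (c + ε * z))| := abs_add_le _ _
      _ ≤ M / 2 * ε ^ 2 + M / 2 * ε ^ 2 := by rw [abs_neg]; exact add_le_add h1 h2
      _ = M * ε ^ 2 := by ring
  refine (intervalIntegral.norm_integral_le_of_norm_le_const hbound).trans ?_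
  rw [show |(1:ℝ)/2 - -(1:ℝ)/2| = 1 by norm_num]
  nlinarith [sq_nonneg ε]
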